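/- Suppose for each k in {0, 1, ..., n} the bipartite graph Γ_k on white vertex set {0,...,n} and black vertex set {0,...,n}, with an edge (i,j) whenever N_{kj}^i ≠ 0, is a forest, and suppose Γ_0 has exactly n + 1 edges while each Γ_k for k ≥ 1 has at least one edge incident to the white vertex k and at least one edge incident to the black vertex k̄. Then the total number of edges over all Γ_k is at most (n+1)² + n², i.e. at most n² + (n+1)² where the 2-box dimension is n + 1. -/

import Mathlib

open SimpleGraph in
lemma acyclic_sup_edge_aux {V : Type*} {G : SimpleGraph V} {x y : V}
    (hG : G.IsAcyclic) (hr : ¬G.Reachable x y) : (G ⊔ SimpleGraph.edge x y).IsAcyclic := by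
  classical
  intro u c hc
  by_cases he : s(x, y) ∈ c.edges
  · have h2 := (adj_and_reachable_delete_edges_iff_exists_cycle).mpr ⟨u, c, hc, he⟩
    refine hr (h2.2.mono ?_)
    intro a b hab
    rw [SimpleGraph.deleteEdges, sdiff_adj, sup_adj] at hab
    rcases hab.1 with h | h
    · exact h
    · exfalso
      apply hab.2
      rw [fromEdgeSet_adj]
      refine ⟨?_, h.ne⟩
      rw [edge_adj] at h
      rcases h.1 with ⟨rfl, rfl⟩ | ⟨rfl, rfl⟩
      · rfl
      · exact Sym2.eq_swap
  · have hsub : ∀ e ∈ c.edges, e ∈ G.edgeSet := by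
      intro e hecy
      have hmem : e ∈ (G ⊔ SimpleGraph.edge x y).edgeSet := c.edges_subset_edgeSet hecy
      rw [edgeSet_sup] at hmem
      rcases hmem with h | h
      · exact h
      · by_cases hxy : x = y
        · subst hxy; rw [edge_self_eq_bot, edgeSet_bot] at h; exact absurd h (Set.notMem_empty _)
        · rw [edge_edgeSet_of_ne hxy, Set.mem_singleton_iff] at h
          exact absurd (h ▸ hecy) he
    exact hG (c.transfer G hsub) (hc.transfer hsub)

open SimpleGraph in
lemma forest_ncard_le_aux {V : Type*} [Fintype V] [Nonempty V] :
    ∀ (m : ℕ) (G : SimpleGraph V), Gᶜ.edgeSet.ncard ≤ m → G.IsAcyclic →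
      G.edgeSet.ncard + 1 ≤ Fintype.card V := by
  classical
  intro m
  induction m with
  | zero =>
    intro G hm hG
    have hconn : G.Connected := by
      by_contra hnc
      rw [connected_iff] at hnc
      push_neg at hnc
      have hpre : ¬G.Preconnected := fun hp => (hnc hp).elim ‹Nonempty V›.some
      obtain ⟨x, hx⟩ := not_forall.mp hpre
      obtain ⟨y, hxy⟩ := not_forall.mp hx
      have hne : x ≠ y := fun h => hxy (h ▸ Reachable.refl x)
      have hcadj : Gᶜ.Adj x y := ⟨hne, fun h => hxy h.reachable⟩
      have : s(x, y) ∈ Gᶜ.edgeSet := hcadj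
      have hpos : 0 < Gᶜ.edgeSet.ncard :=
        Set.ncard_pos (Set.toFinite _) |>.mpr ⟨_, this⟩
      omega
    have ht : G.IsTree := ⟨hconn, hG⟩
    have h := ht.card_edgeFinset
    have h2 : G.edgeSet.ncard = G.edgeFinset.card := by
      simp [Set.ncard_eq_toFinset_card', SimpleGraph.edgeFinset]
    omega
  | succ m ih =>
    intro G hm hG
    by_cases hconn : G.Connected
    · have ht : G.IsTree := ⟨hconn, hG⟩
      have h := ht.card_edgeFinset
      have h2 : G.edgeSet.ncard = G.edgeFinset.card := by
        simp [Set.ncard_eq_toFinset_card', SimpleGraph.edgeFinset]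
      omega
    · rw [connected_iff] at hconn
      push_neg at hconn
      have hpre : ¬G.Preconnected := fun hp => (hconn hp).elim ‹Nonempty V›.some
      obtain ⟨x, hx⟩ := not_forall.mp hpre
      obtain ⟨y, hxy⟩ := not_forall.mp hx
      have hne : x ≠ y := fun h => hxy (h ▸ Reachable.refl x)
      have hnadj : ¬G.Adj x y := fun h => hxy h.reachable
      set H := G ⊔ SimpleGraph.edge x y with hH
      have hHac : H.IsAcyclic := acyclic_sup_edge_aux hG hxy
      have hHe : H.edgeSet = insert s(x, y) G.edgeSet := by
        rw [hH, edgeSet_sup, edge_edgeSet_of_ne hne, Set.union_singleton]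
      have hmemc : s(x, y) ∈ Gᶜ.edgeSet := (⟨hne, hnadj⟩ : Gᶜ.Adj x y)
      have hsub : Hᶜ.edgeSet ⊆ Gᶜ.edgeSet \ {s(x, y)} := by
        intro e he
        induction e with
        | h a b =>
          have hadj : Hᶜ.Adj a b := he
          obtain ⟨hab, hnH⟩ := hadj
          rw [hH, sup_adj] at hnH
          push_neg at hnH
          refine ⟨(⟨hab, hnH.1⟩ : Gᶜ.Adj a b), ?_⟩
          intro hcon
          apply hnH.2
          rw [edge_adj]
          rw [Set.mem_singleton_iff, Sym2.eq_iff] at hcon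
          exact ⟨hcon, hab⟩
      have hcard : Hᶜ.edgeSet.ncard ≤ m := by
        have h1 : Hᶜ.edgeSet.ncard ≤ (Gᶜ.edgeSet \ {s(x, y)}).ncard :=
          Set.ncard_le_ncard hsub (Set.toFinite _)
        have h2 : (Gᶜ.edgeSet \ {s(x, y)}).ncard = Gᶜ.edgeSet.ncard - 1 :=
          Set.ncard_diff_singleton_of_mem hmemc
        have h3 : 1 ≤ Gᶜ.edgeSet.ncard :=
          Set.ncard_pos (Set.toFinite _) |>.mpr ⟨_, hmemc⟩
        omega
      have := ih H hcard hHac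
      have hn : s(x, y) ∉ G.edgeSet := hnadj
      have : H.edgeSet.ncard = G.edgeSet.ncard + 1 := by
        rw [hHe, Set.ncard_insert_of_notMem hn (Set.toFinite _)]
      omega


theorem stmt3 (n : ℕ) (N : Fin (n + 1) → Fin (n + 1) → Fin (n + 1) → ℝ)
    (bar : Fin (n + 1) → Fin (n + 1))
    (Γ : Fin (n + 1) → SimpleGraph (Fin (n + 1) ⊕ Fin (n + 1)))
    (hΓ : ∀ k x y, (Γ k).Adj x y ↔ ∃ i j, N k j i ≠ 0 ∧
      ((x = Sum.inl i ∧ y = Sum.inr j) ∨ (x = Sum.inr j ∧ y = Sum.inl i)))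
    (hforest : ∀ k, (Γ k).IsAcyclic)
    (h0 : (Γ 0).edgeSet.ncard = n + 1)
    (hk : ∀ k, k ≠ 0 → (∃ j, N k j k ≠ 0) ∧ (∃ i, N k (bar k) i ≠ 0)) :
    ∑ k, (Γ k).edgeSet.ncard ≤ (n + 1) ^ 2 + n ^ 2 := by
  have hb : ∀ k, (Γ k).edgeSet.ncard ≤ 2 * n + 1 := by
    intro k
    have h := forest_ncard_le_aux ((Γ k)ᶜ.edgeSet.ncard) (Γ k) le_rfl (hforest k)
    rw [Fintype.card_sum, Fintype.card_fin] at h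
    omega
  have hsum : ∑ k, (Γ k).edgeSet.ncard
      = (Γ 0).edgeSet.ncard + ∑ i : Fin n, (Γ i.succ).edgeSet.ncard :=
    Fin.sum_univ_succ _
  have htail : ∑ i : Fin n, (Γ i.succ).edgeSet.ncard ≤ n * (2 * n + 1) := by
    calc ∑ i : Fin n, (Γ i.succ).edgeSet.ncard
        ≤ ∑ _i : Fin n, (2 * n + 1) := Finset.sum_le_sum fun i _ => hb _
      _ = n * (2 * n + 1) := by simp [Finset.sum_const, Finset.card_univ, mul_comm]
  rw [hsum, h0]
  nlinarith [htail]
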